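/- Let N be a positive integer and let Q := {j² : j = 1,2,…,N} ∪ {0, 1, 2, …, 2N} ⊂ ℤ. Assume there exist points x_1,…,x_m ∈ [0,2π) and real numbers λ_1,…,λ_m such that (1/2π)·∫_0^{2π} |f(x)|² dx = Σ_{j=1}^m λ_j |f(x_j)|² for every f ∈ 𝒯(Q). Then m ≥ N², and consequently m ≥ (|Q|−1)²/9. -/

import Mathlib

open MeasureTheory Real

/-- The set `𝒯(Q)` of univariate trigonometric polynomials with frequencies in the
finite set `Q ⊂ ℤ`. -/
def trig1 (Q : Finset ℤ) : Set (ℝ → ℂ) :=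
  {f | ∃ c : ℤ → ℂ,
        ∀ x : ℝ, f x = ∑ k ∈ Q, c k * Complex.exp (Complex.I * (k : ℂ) * (x : ℂ))}

lemma aux_int_cos (d : ℤ) (hd : d ≠ 0) : ∫ t in (0:ℝ)..(2*π), Real.cos ((d:ℝ)*t) = 0 := by
  have hd' : (d:ℝ) ≠ 0 := Int.cast_ne_zero.mpr hd
  rw [intervalIntegral.integral_comp_mul_left _ hd', integral_cos]
  have h1 : (d:ℝ) * (2*π) = (2*d : ℤ) * π := by push_cast; ring
  rw [h1, Real.sin_int_mul_pi]
  simp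

lemma aux_int_sin (d : ℤ) (hd : d ≠ 0) : ∫ t in (0:ℝ)..(2*π), Real.sin ((d:ℝ)*t) = 0 := by
  have hd' : (d:ℝ) ≠ 0 := Int.cast_ne_zero.mpr hd
  rw [intervalIntegral.integral_comp_mul_left _ hd', integral_sin]
  have h1 : (d:ℝ) * (2*π) = (d : ℤ) * (2*π) := by norm_num
  rw [h1, Real.cos_int_mul_two_pi]
  simp

lemma aux_abs (p q : ℤ) (u : ℂ) (hu : Complex.normSq u = 1) (t : ℝ) :
    ‖Complex.exp (Complex.I * p * t) + u * Complex.exp (Complex.I * q * t)‖ ^ 2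
      = 2 + 2*(u.re * Real.cos (((p - q : ℤ):ℝ) * t) + u.im * Real.sin (((p - q : ℤ):ℝ) * t)) := by
  have hnsq : ∀ k : ℤ, Complex.normSq (Complex.exp (Complex.I * k * t)) = 1 := by
    intro k
    rw [Complex.normSq_eq_norm_sq, Complex.norm_exp]
    simp
  rw [Complex.sq_norm, Complex.normSq_add, hnsq p, Complex.normSq_mul, hnsq q, hu]
  have hconj : (starRingEnd ℂ) (u * Complex.exp (Complex.I * q * t))
      = (starRingEnd ℂ) u * Complex.exp (-(Complex.I * q * t)) := by
    rw [map_mul, ← Complex.exp_conj]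
    congr 1
    simp [map_mul, Complex.conj_I, Complex.conj_ofReal]
  rw [hconj]
  have hprod : Complex.exp (Complex.I * p * t) * ((starRingEnd ℂ) u * Complex.exp (-(Complex.I * q * t)))
      = (starRingEnd ℂ) u * Complex.exp ((((p - q : ℤ):ℝ) * t : ℝ) * Complex.I) := by
    rw [mul_comm (Complex.exp _), mul_assoc, ← Complex.exp_add]
    congr 2
    push_cast
    ring
  rw [hprod, Complex.mul_re, Complex.exp_ofReal_mul_I_re, Complex.exp_ofReal_mul_I_im,
    Complex.conj_re, Complex.conj_im]
  push_cast
  ring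

lemma aux_sum1 {m : ℕ} (x : Fin m → ℝ) (lam : Fin m → ℝ) (Q : Finset ℤ)
    (hexact : ∀ f ∈ trig1 Q,
      (1 / (2 * π)) * (∫ t in (0:ℝ)..(2 * π), ‖f t‖ ^ 2)
        = ∑ j, lam j * ‖f (x j)‖ ^ 2)
    (h0Q : (0:ℤ) ∈ Q) : ∑ j, lam j = 1 := by
  have hmem : (fun _ : ℝ => (1:ℂ)) ∈ trig1 Q := by
    refine ⟨fun k => if k = 0 then 1 else 0, fun t => ?_⟩
    rw [Finset.sum_eq_single 0]
    · simp
    · intro k _ hk; simp [hk]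
    · intro h; exact absurd h0Q h
  have h := hexact _ hmem
  simp only [map_one, norm_one, one_pow, mul_one] at h
  rw [intervalIntegral.integral_const] at h
  simp only [smul_eq_mul, mul_one, sub_zero] at h
  rw [← h]
  have hπ : π ≠ 0 := Real.pi_ne_zero
  field_simp

lemma aux_quad {m : ℕ} (x : Fin m → ℝ) (lam : Fin m → ℝ) (Q : Finset ℤ)
    (hexact : ∀ f ∈ trig1 Q,
      (1 / (2 * π)) * (∫ t in (0:ℝ)..(2 * π), ‖f t‖ ^ 2)
        = ∑ j, lam j * ‖f (x j)‖ ^ 2)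
    (hsum1 : ∑ j, lam j = 1)
    (p q : ℤ) (hp : p ∈ Q) (hq : q ∈ Q) (hpq : p ≠ q) (u : ℂ) (hu : Complex.normSq u = 1) :
    ∑ j, lam j * (u.re * Real.cos (((p - q : ℤ):ℝ) * x j)
        + u.im * Real.sin (((p - q : ℤ):ℝ) * x j)) = 0 := by
  set f : ℝ → ℂ := fun t => Complex.exp (Complex.I * p * t) + u * Complex.exp (Complex.I * q * t)
    with hf
  have hmem : f ∈ trig1 Q := by
    refine ⟨fun k => if k = p then 1 else if k = q then u else 0, fun t => ?_⟩
    have hsplit : ∀ k ∈ Q,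
        (if k = p then (1:ℂ) else if k = q then u else 0) * Complex.exp (Complex.I * k * t)
          = (if k = p then Complex.exp (Complex.I * k * t) else 0)
            + (if k = q then u * Complex.exp (Complex.I * k * t) else 0) := by
      intro k _
      by_cases h1 : k = p
      · subst h1
        simp [hpq]
      · by_cases h2 : k = q <;> simp [h1, h2, Ne.symm hpq]
    rw [Finset.sum_congr rfl hsplit, Finset.sum_add_distrib,
      Finset.sum_ite_eq' Q p, Finset.sum_ite_eq' Q q, if_pos hp, if_pos hq]
  have hd : p - q ≠ 0 := sub_ne_zero.mpr hpq
  have h := hexact f hmem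
  have habs : ∀ t : ℝ, ‖f t‖ ^ 2
      = 2 + 2*(u.re * Real.cos (((p - q : ℤ):ℝ) * t) + u.im * Real.sin (((p - q : ℤ):ℝ) * t)) :=
    fun t => aux_abs p q u hu t
  have hint : (∫ t in (0:ℝ)..(2 * π), ‖f t‖ ^ 2) = 4 * π := by
    rw [intervalIntegral.integral_congr (g := fun t =>
      2 + 2*(u.re * Real.cos (((p - q : ℤ):ℝ) * t) + u.im * Real.sin (((p - q : ℤ):ℝ) * t)))
      (fun t _ => habs t)]
    have hcc : Continuous fun t : ℝ => u.re * Real.cos (((p - q : ℤ):ℝ) * t) :=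
      continuous_const.mul (Real.continuous_cos.comp (continuous_const.mul continuous_id))
    have hcs : Continuous fun t : ℝ => u.im * Real.sin (((p - q : ℤ):ℝ) * t) :=
      continuous_const.mul (Real.continuous_sin.comp (continuous_const.mul continuous_id))
    have hic : IntervalIntegrable (fun t => u.re * Real.cos (((p - q : ℤ):ℝ) * t)
        + u.im * Real.sin (((p - q : ℤ):ℝ) * t)) volume 0 (2*π) :=
      (hcc.add hcs).intervalIntegrable _ _
    rw [intervalIntegral.integral_add intervalIntegrable_const (hic.const_mul 2),
      intervalIntegral.integral_const_mul,
      intervalIntegral.integral_add (hcc.intervalIntegrable _ _) (hcs.intervalIntegrable _ _),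
      intervalIntegral.integral_const_mul, intervalIntegral.integral_const_mul,
      aux_int_cos _ hd, aux_int_sin _ hd, intervalIntegral.integral_const]
    simp
    ring
  rw [hint] at h
  have hlhs : (1 / (2 * π)) * (4 * π) = 2 := by
    have hπ : π ≠ 0 := Real.pi_ne_zero
    field_simp
    ring
  rw [hlhs] at h
  have hrhs : ∑ j, lam j * ‖f (x j)‖ ^ 2
      = 2 * (∑ j, lam j) + 2 * ∑ j, lam j * (u.re * Real.cos (((p - q : ℤ):ℝ) * x j)
        + u.im * Real.sin (((p - q : ℤ):ℝ) * x j)) := by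
    rw [Finset.mul_sum, Finset.mul_sum, ← Finset.sum_add_distrib]
    refine Finset.sum_congr rfl fun j _ => ?_
    rw [habs (x j)]
    ring
  rw [hrhs, hsum1] at h
  linarith

lemma aux_pair (N : ℕ) (hN : 0 < N) (Q : Finset ℤ)
    (hQ : Q = (Finset.Icc 1 N).image (fun j : ℕ => (j : ℤ) ^ 2) ∪
          (Finset.range (2 * N + 1)).image (fun j : ℕ => (j : ℤ)))
    (n : ℕ) (h1 : 1 ≤ n) (h2 : n ≤ N^2) :
    ∃ p ∈ Q, ∃ q ∈ Q, p - q = (n:ℤ) := by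
  have hmem2 : ∀ l : ℕ, l ≤ 2*N → (l:ℤ) ∈ Q := by
    intro l hl
    rw [hQ]
    exact Finset.mem_union_right _
      (Finset.mem_image.mpr ⟨l, Finset.mem_range.mpr (by omega), rfl⟩)
  have hmem1 : ∀ j : ℕ, 1 ≤ j → j ≤ N → ((j:ℤ)^2) ∈ Q := by
    intro j hj1 hj2
    rw [hQ]
    exact Finset.mem_union_left _
      (Finset.mem_image.mpr ⟨j, Finset.mem_Icc.mpr ⟨hj1, hj2⟩, rfl⟩)
  by_cases hn : n ≤ 2*N
  · exact ⟨(n:ℤ), hmem2 n hn, 0, by simpa using hmem2 0 (by omega), by ring⟩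
  · set s := Nat.sqrt (n-1) with hs
    set j := s + 1 with hj
    have hA : n - 1 < j * j := Nat.lt_succ_sqrt (n-1)
    have hB : s * s ≤ n - 1 := Nat.sqrt_le (n-1)
    have hNN : N^2 = N*N := sq N
    have hjN : j ≤ N := by
      by_contra hc
      have hNs : N ≤ s := by omega
      have := Nat.mul_le_mul hNs hNs
      omega
    have hexp : j*j = s*s + 2*s + 1 := by ring
    have hnj : n ≤ j*j := by omega
    have hqle : j*j - n ≤ 2*N := by omega
    refine ⟨(j:ℤ)^2, hmem1 j (by omega) hjN, ((j*j - n : ℕ):ℤ), hmem2 _ hqle, ?_⟩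
    push_cast [Nat.cast_sub hnj]
    ring

/-- **Lower bound for exact `L_2` weighted discretization of `𝒯(Q)`** for
`Q = {j² : 1 ≤ j ≤ N} ∪ {0,1,…,2N}`: if points `x_1,…,x_m ∈ [0,2π)` and real numbers
`λ_1,…,λ_m` satisfy `(1/2π)∫_0^{2π}|f|² dx = ∑_j λ_j |f(x_j)|²` for all `f ∈ 𝒯(Q)`,
then `m ≥ N²`, and consequently `m ≥ (|Q|-1)²/9`. -/
theorem exact_L2_discretization_quadratic_frequencies
    (N : ℕ) (hN : 0 < N) (m : ℕ)
    (x : Fin m → ℝ) (hx : ∀ j, x j ∈ Set.Ico (0 : ℝ) (2 * π)) (lam : Fin m → ℝ)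
    (Q : Finset ℤ)
    (hQ : Q = (Finset.Icc 1 N).image (fun j : ℕ => (j : ℤ) ^ 2) ∪
          (Finset.range (2 * N + 1)).image (fun j : ℕ => (j : ℤ)))
    (hexact : ∀ f ∈ trig1 Q,
      (1 / (2 * π)) * (∫ t in (0:ℝ)..(2 * π), ‖f t‖ ^ 2)
        = ∑ j, lam j * ‖f (x j)‖ ^ 2) :
    N ^ 2 ≤ m ∧ ((Q.card : ℝ) - 1) ^ 2 / 9 ≤ (m : ℝ) := by
  have h0Q : (0:ℤ) ∈ Q := by
    rw [hQ]
    exact Finset.mem_union_right _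
      (Finset.mem_image.mpr ⟨0, Finset.mem_range.mpr (by omega), rfl⟩)
  have hsum1 : ∑ j, lam j = 1 := aux_sum1 x lam Q hexact h0Q
  -- cosine and sine sums vanish for frequencies 1 ≤ n ≤ N²
  have hcs : ∀ n : ℕ, 1 ≤ n → n ≤ N^2 →
      (∑ j, lam j * Real.cos ((n:ℝ) * x j)) = 0 ∧ (∑ j, lam j * Real.sin ((n:ℝ) * x j)) = 0 := by
    intro n h1 h2
    obtain ⟨p, hp, q, hq, hpq⟩ := aux_pair N hN Q hQ n h1 h2
    have hn0 : (n:ℤ) ≠ 0 := by exact_mod_cast Nat.one_le_iff_ne_zero.mp h1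
    have hne : p ≠ q := by
      intro h
      apply hn0
      rw [← hpq, h, sub_self]
    have hcast : ((p - q : ℤ):ℝ) = (n:ℝ) := by rw [hpq]; push_cast; rfl
    constructor
    · have h := aux_quad x lam Q hexact hsum1 p q hp hq hne 1 (by simp)
      rw [hcast] at h
      simpa using h
    · have h := aux_quad x lam Q hexact hsum1 p q hp hq hne Complex.I (by simp)
      rw [hcast] at h
      simpa using h
  -- complex moments
  have key : ∀ d : ℤ, d.natAbs ≤ N^2 →
      (∑ t, (lam t : ℂ) * Complex.exp (Complex.I * d * x t)) = if d = 0 then 1 else 0 := by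
    intro d hdle
    by_cases hd : d = 0
    · subst hd
      simp only [if_pos]
      have : ∀ t : Fin m, (lam t : ℂ) * Complex.exp (Complex.I * (0:ℤ) * x t) = (lam t : ℂ) := by
        intro t; simp
      rw [Finset.sum_congr rfl (fun t _ => this t), ← Complex.ofReal_sum, hsum1,
        Complex.ofReal_one]
    · rw [if_neg hd]
      have hn1 : 1 ≤ d.natAbs := by omega
      obtain ⟨hc0, hs0⟩ := hcs d.natAbs hn1 hdle
      have hc : ∑ j, lam j * Real.cos ((d:ℝ) * x j) = 0 := by
        rcases lt_or_gt_of_ne hd with hneg | hpos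
        · have hd' : (d:ℝ) = -((d.natAbs:ℝ)) := by
            have : d = -(d.natAbs : ℤ) := by omega
            exact_mod_cast this
          simp_rw [hd', neg_mul, Real.cos_neg]
          exact hc0
        · have hd' : (d:ℝ) = ((d.natAbs:ℝ)) := by
            conv_lhs => rw [← Int.natAbs_of_nonneg hpos.le]
            exact Int.cast_natCast _
          simp_rw [hd']
          exact hc0
      have hsg : ∑ j, lam j * Real.sin ((d:ℝ) * x j) = 0 := by
        rcases lt_or_gt_of_ne hd with hneg | hpos
        · have hd' : (d:ℝ) = -((d.natAbs:ℝ)) := by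
            have : d = -(d.natAbs : ℤ) := by omega
            exact_mod_cast this
          simp_rw [hd', neg_mul, Real.sin_neg, mul_neg]
          rw [Finset.sum_neg_distrib]
          rw [hs0]
          ring
        · have hd' : (d:ℝ) = ((d.natAbs:ℝ)) := by
            conv_lhs => rw [← Int.natAbs_of_nonneg hpos.le]
            exact Int.cast_natCast _
          simp_rw [hd']
          exact hs0
      have hterm : ∀ t : Fin m, (lam t : ℂ) * Complex.exp (Complex.I * d * x t)
          = ((lam t * Real.cos ((d:ℝ) * x t) : ℝ) : ℂ)
            + ((lam t * Real.sin ((d:ℝ) * x t) : ℝ) : ℂ) * Complex.I := by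
        intro t
        have harg : Complex.I * d * x t = (((d:ℝ) * x t : ℝ):ℂ) * Complex.I := by
          push_cast; ring
        rw [harg, Complex.exp_mul_I, ← Complex.ofReal_cos, ← Complex.ofReal_sin]
        push_cast
        ring
      rw [Finset.sum_congr rfl (fun t _ => hterm t), Finset.sum_add_distrib,
        ← Finset.sum_mul, ← Complex.ofReal_sum, ← Complex.ofReal_sum, hc, hsg]
      simp
  -- matrix rank argument
  set K := N^2 + 1 with hK
  set A : Matrix (Fin K) (Fin m) ℂ :=
    fun n t => (lam t : ℂ) * Complex.exp (Complex.I * ((n:ℕ):ℂ) * x t) with hA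
  set B : Matrix (Fin m) (Fin K) ℂ :=
    fun t n => Complex.exp (-(Complex.I * ((n:ℕ):ℂ) * x t)) with hB
  have hAB : A * B = 1 := by
    ext n n'
    rw [Matrix.mul_apply, Matrix.one_apply]
    have hterm : ∀ t : Fin m, A n t * B t n'
        = (lam t : ℂ) * Complex.exp (Complex.I * (((n:ℕ):ℤ) - ((n':ℕ):ℤ) : ℤ) * x t) := by
      intro t
      rw [hA, hB]
      simp only
      rw [mul_assoc, ← Complex.exp_add]
      congr 2
      push_cast
      ring
    rw [Finset.sum_congr rfl (fun t _ => hterm t)]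
    have hle : (((n:ℕ):ℤ) - ((n':ℕ):ℤ)).natAbs ≤ N^2 := by
      have h1 : (n:ℕ) < K := n.isLt
      have h2 : (n':ℕ) < K := n'.isLt
      omega
    rw [key _ hle]
    have : ((((n:ℕ):ℤ) - ((n':ℕ):ℤ)) = 0) ↔ n = n' := by
      rw [sub_eq_zero]
      constructor
      · intro h; exact Fin.ext (by exact_mod_cast h)
      · intro h; rw [h]
    simp only [this]
  have hKm : K ≤ m := by
    have h1 : (1 : Matrix (Fin K) (Fin K) ℂ).rank = K := by
      rw [Matrix.rank_one]
      simp
    have h2 : (A * B).rank ≤ B.rank := Matrix.rank_mul_le_right A B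
    have h3 : B.rank ≤ m := by
      have := Matrix.rank_le_card_height B
      simpa using this
    rw [hAB, h1] at h2
    omega
  have hNm : N^2 ≤ m := by omega
  refine ⟨hNm, ?_⟩
  -- cardinality bound
  have hQcard : Q.card ≤ 3*N + 1 := by
    rw [hQ]
    calc ((Finset.Icc 1 N).image (fun j : ℕ => (j : ℤ) ^ 2) ∪
          (Finset.range (2 * N + 1)).image (fun j : ℕ => (j : ℤ))).card
        ≤ ((Finset.Icc 1 N).image (fun j : ℕ => (j : ℤ) ^ 2)).card
          + ((Finset.range (2 * N + 1)).image (fun j : ℕ => (j : ℤ))).card :=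
          Finset.card_union_le _ _
      _ ≤ (Finset.Icc 1 N).card + (Finset.range (2 * N + 1)).card :=
          add_le_add (Finset.card_image_le) (Finset.card_image_le)
      _ = 3*N + 1 := by
          rw [Nat.card_Icc, Finset.card_range]
          omega
  have hQpos : 1 ≤ Q.card := Finset.card_pos.mpr ⟨0, h0Q⟩
  have hc1 : (Q.card : ℝ) - 1 ≤ 3*(N:ℝ) := by
    have : (Q.card : ℝ) ≤ 3*(N:ℝ) + 1 := by exact_mod_cast hQcard
    linarith
  have hc0 : (0:ℝ) ≤ (Q.card : ℝ) - 1 := by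
    have : (1:ℝ) ≤ (Q.card : ℝ) := by exact_mod_cast hQpos
    linarith
  have hm' : (N:ℝ)^2 ≤ (m:ℝ) := by exact_mod_cast hNm
  have hsq : ((Q.card : ℝ) - 1)^2 ≤ 9*(N:ℝ)^2 := by nlinarith
  rw [div_le_iff₀ (by norm_num : (0:ℝ) < 9)]
  nlinarith
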